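/- Let a, b ≥ 1 and let π be a Lorenz permutation of {1,…,a+b} with trip number t and with μ_1 < … < μ_t and ν_1 < … < ν_t defined from π as below. If in addition π is a single cycle of length a+b (so that the associated Lorenz link is a knot), then the integer (a+b)(t−1) − Σ_{k=1}^t μ_k − Σ_{k=1}^t ν_k + (t+1) is even; consequently the unknotting-number formula u(K) = ½((a+b)(t−1) − Σ μ_k − Σ ν_k + (t+1)) for the Lorenz knot K determined by π yields an integer. -/

import Mathlib

open Finset

lemma aux_sign_eq_signAux {n : ℕ} (f : Equiv.Perm (Fin n)) :
    Equiv.Perm.sign f = Equiv.Perm.signAux f := by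
  refine Equiv.Perm.swap_induction_on f ?_ ?_
  · simp [Equiv.Perm.signAux_one]
  · intro g x y hxy ih
    rw [Equiv.Perm.signAux_mul, map_mul, Equiv.Perm.sign_swap hxy,
      Equiv.Perm.signAux_swap hxy, ih]

lemma aux_signAux_eq_pow {n : ℕ} (f : Equiv.Perm (Fin n)) :
    Equiv.Perm.signAux f =
      (-1) ^ ((Equiv.Perm.finPairsLT n).filter fun x => f x.1 ≤ f x.2).card := by
  rw [Equiv.Perm.signAux,
    ← Finset.prod_filter_mul_prod_filter_not (Equiv.Perm.finPairsLT n)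
      (fun x => f x.1 ≤ f x.2)]
  rw [Finset.prod_congr rfl (fun x hx => if_pos (Finset.mem_filter.1 hx).2),
    Finset.prod_congr rfl (fun x hx => if_neg (Finset.mem_filter.1 hx).2),
    Finset.prod_const, Finset.prod_const, one_pow, mul_one]

lemma aux_rank_sum {α : Type*} [LinearOrder α] (s : Finset α) :
    2 * ∑ v ∈ s, (s.filter fun w => v < w).card = s.card * (s.card - 1) := by
  classical
  have hXY : (∑ v ∈ s, (s.filter fun w => v < w).card)
      = ∑ v ∈ s, (s.filter fun w => w < v).card := by
    simp only [Finset.card_filter]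
    rw [Finset.sum_comm]
  have hsum : ∀ v ∈ s, (s.filter fun w => v < w).card + (s.filter fun w => w < v).card
      = s.card - 1 := by
    intro v hv
    have hdisj : Disjoint (s.filter fun w => v < w) (s.filter fun w => w < v) := by
      rw [Finset.disjoint_left]
      intro w h1 h2
      exact absurd ((Finset.mem_filter.1 h1).2.trans (Finset.mem_filter.1 h2).2) (lt_irrefl _)
    have hunion : (s.filter fun w => v < w) ∪ (s.filter fun w => w < v) = s.erase v := by
      ext w
      simp only [Finset.mem_union, Finset.mem_filter, Finset.mem_erase]
      constructor
      · rintro (⟨hw, h⟩ | ⟨hw, h⟩)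
        · exact ⟨h.ne', hw⟩
        · exact ⟨h.ne, hw⟩
      · rintro ⟨hne, hw⟩
        rcases lt_or_gt_of_ne (Ne.symm hne) with h | h
        · exact Or.inl ⟨hw, h⟩
        · exact Or.inr ⟨hw, h⟩
    have := Finset.card_union_of_disjoint hdisj
    rw [hunion, Finset.card_erase_of_mem hv] at this
    omega
  rw [two_mul]
  nth_rewrite 2 [hXY]
  rw [← Finset.sum_add_distrib, Finset.sum_congr rfl hsum, Finset.sum_const, smul_eq_mul]

lemma aux_filter_lt_sum {n a : ℕ} (h : a ≤ n) :
    ∑ i ∈ Finset.univ.filter (fun i : Fin n => (i : ℕ) < a), (i : ℕ)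
      = ∑ k ∈ Finset.range a, k := by
  rw [Finset.sum_filter, Fin.sum_univ_eq_sum_range (fun k => if k < a then k else 0) n,
    ← Finset.sum_filter]
  congr 1
  ext k
  simp only [Finset.mem_filter, Finset.mem_range]
  omega

lemma aux_filter_lt_card {n a : ℕ} (h : a ≤ n) :
    (Finset.univ.filter (fun i : Fin n => (i : ℕ) < a)).card = a := by
  rw [Finset.card_filter, Fin.sum_univ_eq_sum_range (fun k => if k < a then 1 else 0) n,
    ← Finset.card_filter]
  rw [show (Finset.range n).filter (fun k => k < a) = Finset.range a by
    ext k; simp only [Finset.mem_filter, Finset.mem_range]; omega, Finset.card_range]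

set_option maxHeartbeats 1000000 in
/-- Parity of the unknotting-number formula for Lorenz knots.  Points are
indexed `0,…,a+b-1` (0-indexed versions of the 1-based labels `1,…,a+b`):
indices `< a` are the left-hand points `p_1 < … < p_a`, indices `≥ a` are the
right-hand points `q_b < … < q_1` (so `q_ν` has 1-based label `a+b−ν+1`).
A Lorenz permutation `π` is strictly increasing on each of the two blocks.
`M` is the set of (1-based) positions `μ_1 < … < μ_t` of
`{1,…,a} ∩ π({a+1,…,a+b})`, `N` is the set of indices `ν_1 < … < ν_t` with
`q_ν ∈ π({1,…,a})`, and `t = #M` is the trip number.  If `π` is a single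
cycle of length `a+b` (so that the Lorenz link is a knot `K`), then
`(a+b)(t−1) − Σμ_k − Σν_k + (t+1)` is even, so the formula
`u(K) = ½((a+b)(t−1) − Σμ_k − Σν_k + (t+1))` yields an integer. -/
theorem lorenz_unknotting_formula_even (a b : ℕ) (ha : 1 ≤ a) (hb : 1 ≤ b)
    (π : Equiv.Perm (Fin (a + b)))
    (hL : StrictMonoOn π {i : Fin (a + b) | (i : ℕ) < a})
    (hR : StrictMonoOn π {i : Fin (a + b) | a ≤ (i : ℕ)})
    (hcycle : π.IsCycle ∧ π.support.card = a + b) :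
    letI M : Finset ℕ :=
      (Finset.univ.filter (fun i : Fin (a + b) =>
        (i : ℕ) < a ∧ ∃ j : Fin (a + b), a ≤ (j : ℕ) ∧ π j = i)).image
        (fun i : Fin (a + b) => (i : ℕ) + 1)
    letI N : Finset ℕ :=
      (Finset.Icc 1 b).filter (fun ν =>
        ∃ j : Fin (a + b), (j : ℕ) < a ∧ (π j : ℕ) + 1 = a + b - ν + 1)
    letI t : ℕ := M.card
    Even ((a + b : ℤ) * ((t : ℤ) - 1) - (∑ m ∈ M, (m : ℤ)) - (∑ ν ∈ N, (ν : ℤ))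
      + ((t : ℤ) + 1)) := by
  classical
  obtain ⟨hcyc, hsupp⟩ := hcycle
  have hπinj : Function.Injective π := π.injective
  -- goal is already zeta-reduced
  -- basic sets
  set L : Finset (Fin (a + b)) := Finset.univ.filter (fun i => (i : ℕ) < a) with hLdef
  set R : Finset (Fin (a + b)) := Finset.univ.filter (fun i => a ≤ (i : ℕ)) with hRdef
  set M0 : Finset (Fin (a + b)) := Finset.univ.filter (fun i : Fin (a + b) =>
      (i : ℕ) < a ∧ ∃ j : Fin (a + b), a ≤ (j : ℕ) ∧ π j = i) with hM0def
  set V0 : Finset (Fin (a + b)) := Finset.univ.filter (fun i : Fin (a + b) =>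
      a ≤ (i : ℕ) ∧ ∃ j : Fin (a + b), (j : ℕ) < a ∧ π j = i) with hV0def
  have h_univ : L ∪ R = Finset.univ := by
    ext i; simp only [Finset.mem_union, hLdef, hRdef, Finset.mem_filter, Finset.mem_univ,
      true_and, iff_true]; omega
  have h_disjLR : Disjoint L R := by
    rw [Finset.disjoint_left]
    intro i h1 h2
    rw [hLdef, Finset.mem_filter] at h1
    rw [hRdef, Finset.mem_filter] at h2
    omega
  have himg_univ : Finset.univ.image π = (Finset.univ : Finset (Fin (a + b))) :=
    Finset.image_univ_equiv π
  have himg_un : L.image π ∪ R.image π = Finset.univ := by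
    rw [← Finset.image_union, h_univ, himg_univ]
  have himg_disj : Disjoint (L.image π) (R.image π) :=
    (Finset.disjoint_image hπinj).2 h_disjLR
  have hM0L : M0 = L ∩ R.image π := by
    ext i
    simp only [hM0def, hLdef, hRdef, Finset.mem_filter, Finset.mem_univ, true_and,
      Finset.mem_inter, Finset.mem_image]
  have hV0R : V0 = R ∩ L.image π := by
    ext i
    simp only [hV0def, hLdef, hRdef, Finset.mem_filter, Finset.mem_univ, true_and,
      Finset.mem_inter, Finset.mem_image]
  have hcardL : L.card = a := aux_filter_lt_card (by omega)
  have hcardR : R.card = b := by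
    have h1 := Finset.card_filter_add_card_filter_not
      (s := (Finset.univ : Finset (Fin (a + b)))) (p := fun i => (i : ℕ) < a)
    have h2 : (Finset.univ.filter (fun i : Fin (a + b) => ¬ (i : ℕ) < a)) = R := by
      rw [hRdef]; congr 1; ext i; omega
    rw [h2] at h1
    rw [← hLdef] at h1
    have h3 : (Finset.univ : Finset (Fin (a + b))).card = a + b := by simp
    omega
  have hcardimgL : (L.image π).card = a := by
    rw [Finset.card_image_of_injective _ hπinj, hcardL]
  -- splitting L and image π L
  have hsplit1 : (L ∩ L.image π) ∪ M0 = L := by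
    rw [hM0L, ← Finset.inter_union_distrib_left, himg_un, Finset.inter_univ]
  have hdisj1 : Disjoint (L ∩ L.image π) M0 := by
    rw [hM0L]
    exact himg_disj.mono Finset.inter_subset_right Finset.inter_subset_right
  have hsplit2 : (L ∩ L.image π) ∪ V0 = L.image π := by
    rw [hV0R, ← Finset.union_inter_distrib_right, h_univ, Finset.univ_inter]
  have hdisj2 : Disjoint (L ∩ L.image π) V0 := by
    rw [hV0R]
    exact h_disjLR.mono Finset.inter_subset_left Finset.inter_subset_left
  have hcard_eq : V0.card = M0.card := by
    have c1 : (L ∩ L.image π).card + M0.card = a := by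
      rw [← Finset.card_union_of_disjoint hdisj1, hsplit1, hcardL]
    have c2 : (L ∩ L.image π).card + V0.card = a := by
      rw [← Finset.card_union_of_disjoint hdisj2, hsplit2, hcardimgL]
    omega
  -- sums over the pieces
  have e1 : (∑ i ∈ L ∩ L.image π, (i : ℕ)) + (∑ i ∈ M0, (i : ℕ)) = ∑ i ∈ L, (i : ℕ) := by
    rw [← Finset.sum_union hdisj1, hsplit1]
  have e2 : (∑ i ∈ L ∩ L.image π, (i : ℕ)) + (∑ i ∈ V0, (i : ℕ))
      = ∑ j ∈ L, ((π j : Fin (a + b)) : ℕ) := by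
    rw [← Finset.sum_union hdisj2, hsplit2,
      Finset.sum_image (fun x _ y _ h => hπinj h)]
  have e3 : (∑ j ∈ L, ((π j : Fin (a + b)) : ℕ)) + (∑ j ∈ R, ((π j : Fin (a + b)) : ℕ))
      = ∑ i : Fin (a + b), (i : ℕ) := by
    rw [← Finset.sum_union h_disjLR, h_univ]
    exact Equiv.sum_comp π (fun i => (i : ℕ))
  have eTL : 2 * (∑ i ∈ L, (i : ℕ)) = a * (a - 1) := by
    rw [hLdef, aux_filter_lt_sum (by omega : a ≤ a + b)]
    have := Finset.sum_range_id_mul_two a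
    omega
  have eTN : 2 * (∑ i : Fin (a + b), (i : ℕ)) = (a + b) * (a + b - 1) := by
    rw [Fin.sum_univ_eq_sum_range (fun k => k) (a + b)]
    have := Finset.sum_range_id_mul_two (a + b)
    omega
  -- the inversion count
  set invc : ℕ := ((Equiv.Perm.finPairsLT (a + b)).filter fun x => π x.1 ≤ π x.2).card
    with hinvdef
  have hinv_pair : invc = ((Finset.univ ×ˢ Finset.univ).filter
      fun p : Fin (a + b) × Fin (a + b) => p.2 < p.1 ∧ π p.1 ≤ π p.2).card := by
    apply Finset.card_nbij (i := fun x => (x.1, x.2))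
    · intro x hx
      rw [Finset.mem_coe, Finset.mem_filter] at hx
      rw [Finset.mem_coe, Finset.mem_filter, Finset.mem_product]
      exact ⟨⟨Finset.mem_univ _, Finset.mem_univ _⟩,
        Equiv.Perm.mem_finPairsLT.1 hx.1, hx.2⟩
    · intro x _ y _ h
      obtain ⟨h1, h2⟩ := Prod.ext_iff.1 h
      exact Sigma.ext h1 (heq_of_eq h2)
    · intro p hp
      rw [Finset.mem_coe, Finset.mem_filter] at hp
      refine ⟨⟨p.1, p.2⟩, ?_, rfl⟩
      rw [Finset.mem_coe, Finset.mem_filter]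
      exact ⟨Equiv.Perm.mem_finPairsLT.2 hp.2.1, hp.2.2⟩
  have hprod : ((Finset.univ ×ˢ Finset.univ).filter
      fun p : Fin (a + b) × Fin (a + b) => p.2 < p.1 ∧ π p.1 ≤ π p.2).card
      = ∑ i : Fin (a + b), (Finset.univ.filter fun j => j < i ∧ π i ≤ π j).card := by
    rw [Finset.card_filter, Finset.sum_product]
    simp only [Finset.card_filter]
  have hinner_L : ∀ i ∈ L, (Finset.univ.filter fun j => j < i ∧ π i ≤ π j) = ∅ := by
    intro i hi
    rw [Finset.filter_eq_empty_iff]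
    rintro j - ⟨hji, hle⟩
    have hia : (i : ℕ) < a := by rw [hLdef, Finset.mem_filter] at hi; exact hi.2
    have hja : (j : ℕ) < a := lt_trans hji hia
    exact absurd (hL hja hia hji) (not_lt.2 hle)
  have hinner_R : ∀ i ∈ R, (Finset.univ.filter fun j => j < i ∧ π i ≤ π j)
      = L.filter fun j => π i < π j := by
    intro i hi
    have hia : a ≤ (i : ℕ) := by rw [hRdef, Finset.mem_filter] at hi; exact hi.2
    ext j
    simp only [Finset.mem_filter, Finset.mem_univ, true_and, hLdef]
    constructor
    · rintro ⟨hji, hle⟩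
      have hja : (j : ℕ) < a := by
        by_contra hcon
        exact absurd (hR (not_lt.1 hcon) hia hji) (not_lt.2 hle)
      exact ⟨hja, lt_of_le_of_ne hle (fun h => hji.ne' (hπinj h))⟩
    · rintro ⟨hja, hlt⟩
      have hji : (j : ℕ) < (i : ℕ) := lt_of_lt_of_le hja hia
      exact ⟨hji, hlt.le⟩
  have hsplitsum : ∀ f : Fin (a + b) → ℕ,
      (∑ i : Fin (a + b), f i) = (∑ i ∈ L, f i) + ∑ i ∈ R, f i := by
    intro f; rw [← Finset.sum_union h_disjLR, h_univ]
  have hinv_sum : invc = ∑ i ∈ R, (L.filter fun j => π i < π j).card := by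
    rw [hinv_pair, hprod, hsplitsum,
      Finset.sum_eq_zero (fun i hi => by rw [hinner_L i hi, Finset.card_empty]),
      zero_add]
    exact Finset.sum_congr rfl (fun i hi => by rw [hinner_R i hi])
  -- counting per element of R
  have hD : ∀ i ∈ R, (L.filter fun j => π i < π j).card
      + (R.filter fun j => π i < π j).card + ((π i : Fin (a + b)) : ℕ) = a + b - 1 := by
    intro i _
    have hc : (L.filter fun j => π i < π j).card + (R.filter fun j => π i < π j).card
        = (Finset.univ.filter fun j => π i < π j).card := by
      rw [← Finset.card_union_of_disjoint (Finset.disjoint_filter_filter h_disjLR),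
        ← Finset.filter_union, h_univ]
    have himg2 : (Finset.univ.filter fun j => π i < π j).card
        = (Finset.univ.filter fun w => π i < w).card := by
      conv_rhs => rw [← himg_univ, Finset.filter_image]
      rw [Finset.card_image_of_injective _ hπinj]
    have hioi : (Finset.univ.filter fun w => π i < w) = Finset.Ioi (π i) := by
      ext w; simp [Finset.mem_Ioi]
    have hcard := Fin.card_Ioi (a := π i)
    have hlt : ((π i : Fin (a + b)) : ℕ) < a + b := (π i).isLt
    rw [hc, himg2, hioi, hcard]
    omega
  -- the rank sum over the right block
  have hc2img : ∀ i : Fin (a + b), (R.filter fun j => π i < π j).card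
      = ((R.image π).filter fun w => π i < w).card := by
    intro i
    rw [Finset.filter_image, Finset.card_image_of_injective _ hπinj]
  have hcardimgR : (R.image π).card = b := by
    rw [Finset.card_image_of_injective _ hπinj, hcardR]
  have hCB : (∑ i ∈ R, (R.filter fun j => π i < π j).card)
      = ∑ v ∈ R.image π, ((R.image π).filter fun w => v < w).card :=
    calc (∑ i ∈ R, (R.filter fun j => π i < π j).card)
        = ∑ i ∈ R, ((R.image π).filter fun w => π i < w).card :=
          Finset.sum_congr rfl (fun i _ => hc2img i)
      _ = ∑ v ∈ R.image π, ((R.image π).filter fun w => v < w).card :=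
          (Finset.sum_image (f := fun v => ((R.image π).filter fun w => v < w).card)
            (g := fun x => π x) (fun x _ y _ h => hπinj h)).symm
  have hrank := aux_rank_sum (R.image π)
  rw [hcardimgR] at hrank
  have e4 : invc + (∑ v ∈ R.image π, ((R.image π).filter fun w => v < w).card)
      + (∑ j ∈ R, ((π j : Fin (a + b)) : ℕ)) = b * (a + b - 1) := by
    have h := Finset.sum_congr rfl hD
    rw [Finset.sum_add_distrib, Finset.sum_add_distrib, Finset.sum_const, smul_eq_mul,
      hcardR] at h
    rw [hinv_sum, ← hCB]
    exact h
  -- the sign computation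
  have hsign : Equiv.Perm.sign π = -(-1) ^ (a + b) := by rw [hcyc.sign, hsupp]
  rw [aux_sign_eq_signAux, aux_signAux_eq_pow, ← hinvdef] at hsign
  have heven : Even (invc + (a + b) + 1) := by
    rw [← neg_one_pow_eq_one_iff_even (R := ℤˣ) (by decide)]
    rw [pow_add, pow_add, hsign, pow_one, neg_mul, neg_mul_neg, mul_one,
      Int.units_mul_self]
  -- the M and N sums
  have hplusinj : Function.Injective (fun i : Fin (a + b) => (i : ℕ) + 1) := by
    intro i j h
    simp only at h
    exact Fin.ext (by omega)
  have hMcard : (M0.image fun i : Fin (a + b) => (i : ℕ) + 1).card = M0.card :=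
    Finset.card_image_of_injective _ hplusinj
  have hMsum : (∑ m ∈ M0.image (fun i : Fin (a + b) => (i : ℕ) + 1), m)
      = (∑ i ∈ M0, (i : ℕ)) + M0.card := by
    rw [Finset.sum_image (fun x _ y _ h => hplusinj h), Finset.sum_add_distrib,
      Finset.sum_const, smul_eq_mul, mul_one]
  have hNset : ((Finset.Icc 1 b).filter (fun ν =>
      ∃ j : Fin (a + b), (j : ℕ) < a ∧ ((π j : Fin (a + b)) : ℕ) + 1 = a + b - ν + 1))
      = V0.image (fun i : Fin (a + b) => a + b - (i : ℕ)) := by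
    ext ν
    simp only [Finset.mem_filter, Finset.mem_Icc, Finset.mem_image, hV0def,
      Finset.mem_univ, true_and]
    constructor
    · rintro ⟨⟨h1, h2⟩, j, hja, hEq⟩
      exact ⟨π j, ⟨by omega, j, hja, rfl⟩, by omega⟩
    · rintro ⟨i, ⟨hia, j, hja, hji⟩, rfl⟩
      have hval : ((π j : Fin (a + b)) : ℕ) = (i : ℕ) := by rw [hji]
      have hlt : (i : ℕ) < a + b := i.isLt
      exact ⟨⟨by omega, by omega⟩, j, hja, by omega⟩
  have hNinjOn : ∀ x ∈ V0, ∀ y ∈ V0, a + b - (x : ℕ) = a + b - (y : ℕ) → x = y := by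
    intro x hx y hy h
    rw [hV0def, Finset.mem_filter] at hx hy
    obtain ⟨-, hxa, -⟩ := hx
    obtain ⟨-, hya, -⟩ := hy
    have h1 : (x : ℕ) < a + b := x.isLt
    have h2 : (y : ℕ) < a + b := y.isLt
    exact Fin.ext (by omega)
  have hNsum : (∑ ν ∈ V0.image (fun i : Fin (a + b) => a + b - (i : ℕ)), ν) + (∑ i ∈ V0, (i : ℕ))
      = V0.card * (a + b) := by
    rw [Finset.sum_image hNinjOn, ← Finset.sum_add_distrib,
      Finset.sum_congr rfl
        (fun (i : Fin (a + b)) _ =>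
          (by have := i.isLt; omega : a + b - (i : ℕ) + (i : ℕ) = a + b)),
      Finset.sum_const, smul_eq_mul]
  -- assemble the goal
  rw [hNset, hMcard]
  have hcast1 : (∑ m ∈ M0.image (fun i : Fin (a + b) => (i : ℕ) + 1), (m : ℤ))
      = (∑ i ∈ M0, ((i : ℕ) : ℤ)) + (M0.card : ℤ) := by
    have := congrArg (fun k : ℕ => (k : ℤ)) hMsum
    push_cast at this
    exact this
  rw [hcard_eq] at hNsum
  have hcast2 : (∑ ν ∈ V0.image (fun i : Fin (a + b) => a + b - (i : ℕ)), (ν : ℤ))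
      + (∑ i ∈ V0, ((i : ℕ) : ℤ)) = (M0.card : ℤ) * ((a : ℤ) + b) := by
    have := congrArg (fun k : ℕ => (k : ℤ)) hNsum
    push_cast at this
    exact this
  have key : ((a : ℤ) + b) * ((M0.card : ℤ) - 1)
      - (∑ m ∈ M0.image (fun i : Fin (a + b) => (i : ℕ) + 1), (m : ℤ))
      - (∑ ν ∈ V0.image (fun i : Fin (a + b) => a + b - (i : ℕ)), (ν : ℤ))
      + ((M0.card : ℤ) + 1)
      = (∑ i ∈ V0, ((i : ℕ) : ℤ)) - (∑ i ∈ M0, ((i : ℕ) : ℤ)) - ((a : ℤ) + b) + 1 := by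
    linear_combination - hcast1 - hcast2
  rw [key, Int.even_iff]
  rw [Nat.even_iff] at heven
  -- arithmetic identities for the products
  obtain ⟨q, hq⟩ : ∃ q, q = a * b := ⟨_, rfl⟩
  have p1 : b * (a + b - 1) = q + b * (b - 1) := by
    rw [hq, show a + b - 1 = a + (b - 1) by omega, Nat.mul_add, Nat.mul_comm b a]
  have p2 : (a + b) * (a + b - 1) = a * (a - 1) + b * (b - 1) + 2 * q := by
    rw [hq]
    zify [ha, hb, show 1 ≤ a + b by omega]
    ring
  rw [p1] at e4
  rw [p2] at eTN
  obtain ⟨qa, hqa⟩ : ∃ x, x = a * (a - 1) := ⟨_, rfl⟩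
  rw [← hqa] at eTL eTN
  obtain ⟨qb, hqb⟩ : ∃ x, x = b * (b - 1) := ⟨_, rfl⟩
  rw [← hqb] at hrank eTN e4
  rw [← Nat.cast_sum V0 (fun i => (i : ℕ)), ← Nat.cast_sum M0 (fun i => (i : ℕ))]
  omega
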